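/- Let Ω be a compact metric space, T : Ω → Ω a homeomorphism such that every T-orbit is dense (minimality), and let (f_n)_{n≥1} be a continuous subadditive cocycle, i.e. each f_n : Ω → ℝ is continuous and f_{n+m}(ω) ≤ f_n(ω) + f_m(T^n ω) for all n,m ≥ 1 and all ω ∈ Ω. If the limit φ(ω) = lim_{n→∞} f_n(ω)/n exists for every ω ∈ Ω, then φ is a constant function and the convergence f_n/n → φ is uniform on Ω. -/

import Mathlib

open Filter Set Topology

/-- Minimality: every `ℤ`-orbit of the homeomorphism `T` is dense. -/
def IsMinimalSystem {Ω : Type*} [MetricSpace Ω] (T : Ω ≃ₜ Ω) : Prop :=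
  ∀ ω : Ω, Dense (Set.range fun n : ℤ => (T.toEquiv ^ n) ω)

lemma symm_minimal {Ω : Type*} [MetricSpace Ω] (T : Ω ≃ₜ Ω) (h : IsMinimalSystem T) :
    IsMinimalSystem T.symm := by
  intro ω
  have he : (Set.range fun n : ℤ => (T.symm.toEquiv ^ n) ω)
      = (Set.range fun n : ℤ => (T.toEquiv ^ n) ω) := by
    have hsymm : T.symm.toEquiv = (T.toEquiv)⁻¹ := rfl
    ext y
    simp only [Set.mem_range, hsymm]
    constructor
    · rintro ⟨n, rfl⟩
      exact ⟨-n, by rw [zpow_neg, ← inv_zpow]⟩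
    · rintro ⟨n, rfl⟩
      exact ⟨-n, by rw [zpow_neg, ← inv_zpow, inv_inv]⟩
  rw [he]
  exact h ω

/-- Bounded hitting time of a nonempty open set, for a minimal homeomorphism of a
compact metric space. -/
lemma hit_lemma {Ω : Type*} [MetricSpace Ω] [CompactSpace Ω]
    (S : Ω ≃ₜ Ω) (hS : IsMinimalSystem S) {U : Set Ω} (hU : IsOpen U) (hne : U.Nonempty) :
    ∃ R : ℕ, ∀ ω : Ω, ∃ t ≤ R, (⇑S)^[t] ω ∈ U := by
  have hSc : Continuous (⇑S) := S.continuous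
  have hScs : Continuous (⇑S.symm) := S.symm.continuous
  have key : ∀ ω : Ω, ∃ t : ℕ, (⇑S)^[t] ω ∈ U := by
    intro ω
    obtain ⟨x, -, ψ, hψ, hlim⟩ := isCompact_univ.tendsto_subseq
      (x := fun n : ℕ => (⇑S)^[n] ω) (fun n => Set.mem_univ _)
    obtain ⟨y, hy, hyU⟩ := (hS x).exists_mem_open hU hne
    obtain ⟨m, rfl⟩ := hy
    rcases m with k | k
    · -- nonnegative power
      have hco : ((S.toEquiv ^ (Int.ofNat k)) x) = (⇑S)^[k] x := by
        rw [Int.ofNat_eq_natCast, zpow_natCast, Equiv.Perm.coe_pow]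
        rfl
      have hlim' : Tendsto (fun j => (⇑S)^[k] ((⇑S)^[ψ j] ω)) atTop (𝓝 ((⇑S)^[k] x)) :=
        ((hSc.iterate k).tendsto x).comp hlim
      have hyU' : (⇑S)^[k] x ∈ U := by rw [← hco]; exact hyU
      obtain ⟨j, hj⟩ := (hlim'.eventually (hU.eventually_mem hyU')).exists
      exact ⟨k + ψ j, by rwa [Function.iterate_add_apply]⟩
    · -- negative power
      set a := k + 1
      set y := (S.toEquiv ^ (Int.negSucc k)) x with hy
      have hne' : (Int.negSucc k) = -(a : ℤ) := by
        rw [Int.negSucc_eq]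
        push_cast
        show -((k:ℤ) + 1) = -((k+1 : ℕ) : ℤ)
        omega
      have hya : y = (S.toEquiv ^ (-(a : ℤ))) x := by
        rw [hy, hne']
      have hxy : (⇑S)^[a] y = x := by
        have h2 : (S.toEquiv ^ (a : ℕ)) y = x := by
          rw [hya, ← Equiv.Perm.mul_apply, ← zpow_natCast, ← zpow_add]
          simp
        have h3 : (⇑S)^[a] y = (S.toEquiv ^ (a : ℕ)) y := by
          rw [Equiv.Perm.coe_pow]; rfl
        rw [h3, h2]
      have hyx : (⇑S.symm)^[a] x = y := by
        rw [← hxy]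
        exact (Function.LeftInverse.iterate S.symm_apply_apply a) y
      have hlim' : Tendsto (fun j => (⇑S.symm)^[a] ((⇑S)^[ψ j] ω)) atTop
          (𝓝 ((⇑S.symm)^[a] x)) := ((hScs.iterate a).tendsto x).comp hlim
      rw [hyx] at hlim'
      obtain ⟨j, hjU, hja⟩ :=
        ((hlim'.eventually (hU.eventually_mem hyU)).and (eventually_ge_atTop a)).exists
      have hψa : a ≤ ψ j := le_trans hja (hψ.le_apply)
      refine ⟨ψ j - a, ?_⟩
      have hdecomp : (⇑S)^[ψ j] ω = (⇑S)^[a] ((⇑S)^[ψ j - a] ω) := by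
        rw [← Function.iterate_add_apply]
        congr 1
        omega
      have : (⇑S.symm)^[a] ((⇑S)^[ψ j] ω) = (⇑S)^[ψ j - a] ω := by
        rw [hdecomp]
        exact (Function.LeftInverse.iterate S.symm_apply_apply a) _
      rwa [this] at hjU
  have hcov : (Set.univ : Set Ω) ⊆ ⋃ t : ℕ, (⇑S)^[t] ⁻¹' U := by
    intro ω _
    obtain ⟨t, ht⟩ := key ω
    exact Set.mem_iUnion.mpr ⟨t, ht⟩
  obtain ⟨s, hs⟩ := isCompact_univ.elim_finite_subcover (fun t : ℕ => (⇑S)^[t] ⁻¹' U)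
    (fun t => hU.preimage (hSc.iterate t)) hcov
  refine ⟨s.sup id, fun ω => ?_⟩
  have := hs (Set.mem_univ ω)
  simp only [Set.mem_iUnion, Set.mem_preimage] at this
  obtain ⟨t, hts, htU⟩ := this
  exact ⟨t, Finset.le_sup (f := id) hts, htU⟩

/-- Furstenberg–Weiss: for a minimal system and a continuous subadditive cocycle
`(f_n)`, pointwise existence of `φ(ω) = lim f_n(ω)/n` implies that `φ` is constant and the
convergence is uniform. -/
theorem subadditive_pointwise_implies_uniform
    {Ω : Type*} [MetricSpace Ω] [CompactSpace Ω]
    (T : Ω ≃ₜ Ω) (hmin : IsMinimalSystem T)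
    (f : ℕ → Ω → ℝ)
    (hcont : ∀ n : ℕ, 1 ≤ n → Continuous (f n))
    (hsub : ∀ n m : ℕ, 1 ≤ n → 1 ≤ m → ∀ ω : Ω, f (n + m) ω ≤ f n ω + f m ((⇑T)^[n] ω))
    (φ : Ω → ℝ)
    (hφ : ∀ ω : Ω, Filter.Tendsto (fun n : ℕ => f n ω / (n : ℝ)) Filter.atTop (nhds (φ ω))) :
    (∃ c : ℝ, ∀ ω : Ω, φ ω = c) ∧
      TendstoUniformly (fun (n : ℕ) (ω : Ω) => f n ω / (n : ℝ)) φ Filter.atTop := by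
  classical
  rcases isEmpty_or_nonempty Ω with hΩ | hΩ
  · refine ⟨⟨0, fun ω => (hΩ.false ω).elim⟩, ?_⟩
    rw [Metric.tendstoUniformly_iff]
    intro ε hε
    filter_upwards with n ω
    exact (hΩ.false ω).elim
  -- a bound on `f 1`
  obtain ⟨C₁, hC₁⟩ : ∃ C : ℝ, ∀ x : Ω, |f 1 x| ≤ C := by
    obtain ⟨C, hC⟩ := isCompact_univ.exists_bound_of_continuousOn (hcont 1 le_rfl).continuousOn
    exact ⟨C, fun x => by simpa [Real.norm_eq_abs] using hC x (Set.mem_univ x)⟩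
  -- linear bound on all `f n`
  have hfn_le : ∀ n : ℕ, 1 ≤ n → ∀ x : Ω, f n x ≤ (n : ℝ) * C₁ := by
    intro n
    induction n with
    | zero => omega
    | succ n ih =>
      intro _ x
      rcases Nat.eq_zero_or_pos n with rfl | hn
      · simpa using le_of_abs_le (hC₁ x)
      · have h1 := hsub n 1 hn le_rfl x
        have h2 := ih hn x
        have h3 := le_of_abs_le (hC₁ ((⇑T)^[n] x))
        push_cast
        linarith
  -- `φ` bounded above
  have hφ_le : ∀ ω : Ω, φ ω ≤ C₁ := by
    intro ω
    refine le_of_tendsto (hφ ω) ?_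
    filter_upwards [eventually_ge_atTop 1] with n hn
    have hn0 : (0 : ℝ) < n := by exact_mod_cast hn
    rw [div_le_iff₀ hn0]
    calc f n ω ≤ (n : ℝ) * C₁ := hfn_le n hn ω
      _ = C₁ * n := by ring
  -- Key uniform estimate.
  have key : ∀ δ : ℝ, 0 < δ → ∃ N : ℕ, 1 ≤ N ∧ ∃ A : ℝ, 0 ≤ A ∧ ∃ c : ℝ,
      ∀ ω : Ω, ∀ n : ℕ, N ≤ n →
        (n : ℝ) * (c - 3 * δ) - A ≤ f n ω ∧ f n ω ≤ (n : ℝ) * (c + 3 * δ) + A := by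
    intro δ hδ
    -- Baire category: a set where the convergence is `δ`-uniform has interior.
    set SS : ℕ → Set Ω := fun N =>
      {ω | ∀ n, N ≤ n → ∀ m, N ≤ m → f n ω / n ≤ f m ω / m + δ} with hSS
    have hSclosed : ∀ N : ℕ, 1 ≤ N → IsClosed (SS N) := by
      intro N hN
      have heq : SS N = ⋂ (n : ℕ), ⋂ (m : ℕ),
          {ω | N ≤ n → N ≤ m → f n ω / n ≤ f m ω / m + δ} := by
        ext ω
        simp only [hSS, Set.mem_iInter, Set.mem_setOf_eq]
        tauto
      rw [heq]
      refine isClosed_iInter fun n => isClosed_iInter fun m => ?_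
      by_cases hn : N ≤ n
      · by_cases hm : N ≤ m
        · have : {ω : Ω | N ≤ n → N ≤ m → f n ω / n ≤ f m ω / m + δ}
              = {ω : Ω | f n ω / n ≤ f m ω / m + δ} := by
            ext ω; simp [hn, hm]
          rw [this]
          exact isClosed_le ((hcont n (hN.trans hn)).div_const _)
            (((hcont m (hN.trans hm)).div_const _).add continuous_const)
        · have : {ω : Ω | N ≤ n → N ≤ m → f n ω / n ≤ f m ω / m + δ} = Set.univ := by
            ext ω; simp [hm]
          rw [this]; exact isClosed_univ
      · have : {ω : Ω | N ≤ n → N ≤ m → f n ω / n ≤ f m ω / m + δ} = Set.univ := by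
          ext ω; simp [hn]
        rw [this]; exact isClosed_univ
    have hScover : ⋃ N : ℕ, SS (N + 1) = Set.univ := by
      ext ω
      simp only [Set.mem_iUnion, Set.mem_univ, iff_true]
      obtain ⟨N, hN⟩ := (Metric.tendsto_atTop.mp (hφ ω)) (δ / 2) (by positivity)
      refine ⟨N, fun n hn m hm => ?_⟩
      have h1 := hN n (by omega)
      have h2 := hN m (by omega)
      rw [Real.dist_eq] at h1 h2
      have h1' := abs_lt.mp h1
      have h2' := abs_lt.mp h2
      linarith [h1'.1, h1'.2, h2'.1, h2'.2]
    obtain ⟨N₀', hN₀'⟩ := nonempty_interior_of_iUnion_of_closed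
      (fun N => hSclosed (N + 1) (by omega)) hScover
    set N₀ := N₀' + 1 with hN₀def
    set U := interior (SS N₀) with hUdef
    have hUopen : IsOpen U := isOpen_interior
    have hUne : U.Nonempty := hN₀'
    have hUsub : U ⊆ SS N₀ := interior_subset
    have hN₀1 : 1 ≤ N₀ := by omega
    -- at a point of `SS N₀`, all ratios beyond `N₀` are within `δ` of `φ`
    have hSpt : ∀ ω ∈ SS N₀, ∀ n, N₀ ≤ n → φ ω - δ ≤ f n ω / n ∧ f n ω / n ≤ φ ω + δ := by
      intro ω hω n hn
      constructor
      · have h := le_of_tendsto (hφ ω)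
          (eventually_atTop.mpr ⟨N₀, fun m hm => hω m hm n hn⟩)
        linarith
      · have ht : Tendsto (fun m : ℕ => f m ω / m + δ) atTop (𝓝 (φ ω + δ)) :=
          (hφ ω).add_const δ
        exact ge_of_tendsto ht (eventually_atTop.mpr ⟨N₀, fun m hm => hω n hn m hm⟩)
    set cU := sSup (φ '' U) with hcUdef
    have hbdd : BddAbove (φ '' U) := ⟨C₁, by rintro y ⟨x, -, rfl⟩; exact hφ_le x⟩
    obtain ⟨u₁, hu₁U⟩ := hUne
    have hu₁ : φ u₁ ≤ cU := le_csSup hbdd ⟨u₁, hu₁U, rfl⟩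
    obtain ⟨y₀, hy₀mem, hy₀⟩ := exists_lt_of_lt_csSup
      (⟨φ u₁, ⟨u₁, hu₁U, rfl⟩⟩ : (φ '' U).Nonempty)
      (show cU - δ < cU by linarith)
    obtain ⟨u₀, hu₀U, rfl⟩ := hy₀mem
    -- good open sets for the upper and lower bounds
    set Wp := U ∩ {ω | f N₀ ω / N₀ < cU + 2 * δ} with hWpdef
    set Wm := U ∩ {ω | cU - 2 * δ < f N₀ ω / N₀} with hWmdef
    have hWpopen : IsOpen Wp :=
      hUopen.inter (isOpen_lt ((hcont N₀ hN₀1).div_const _) continuous_const)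
    have hWmopen : IsOpen Wm :=
      hUopen.inter (isOpen_lt continuous_const ((hcont N₀ hN₀1).div_const _))
    have hWpne : Wp.Nonempty := by
      refine ⟨u₁, hu₁U, ?_⟩
      have h := (hSpt u₁ (hUsub hu₁U) N₀ le_rfl).2
      simp only [Set.mem_setOf_eq]
      linarith
    have hWmne : Wm.Nonempty := by
      refine ⟨u₀, hu₀U, ?_⟩
      have h := (hSpt u₀ (hUsub hu₀U) N₀ le_rfl).1
      simp only [Set.mem_setOf_eq]
      linarith
    have hWpprop : ∀ ω' ∈ Wp, ∀ n, N₀ ≤ n → f n ω' / n ≤ cU + 3 * δ := by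
      intro ω' hω' n hn
      have h1 := hUsub hω'.1 n hn N₀ le_rfl
      have h2 := hω'.2
      simp only [Set.mem_setOf_eq] at h2
      linarith
    have hWmprop : ∀ ω' ∈ Wm, ∀ n, N₀ ≤ n → cU - 3 * δ ≤ f n ω' / n := by
      intro ω' hω' n hn
      have h1 := hUsub hω'.1 N₀ le_rfl n hn
      have h2 := hω'.2
      simp only [Set.mem_setOf_eq] at h2
      linarith
    obtain ⟨Rp, hRp⟩ := hit_lemma T hmin hWpopen hWpne
    obtain ⟨Rm, hRm⟩ := hit_lemma T.symm (symm_minimal T hmin) hWmopen hWmne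
    set R := max Rp Rm with hRdef
    -- a uniform bound on `f s` for `1 ≤ s ≤ R`
    have hBs : ∀ s : ℕ, ∃ B : ℝ, 1 ≤ s → ∀ x : Ω, |f s x| ≤ B := by
      intro s
      rcases Nat.eq_zero_or_pos s with rfl | hs
      · exact ⟨0, by omega⟩
      · obtain ⟨C, hC⟩ := isCompact_univ.exists_bound_of_continuousOn
          (hcont s hs).continuousOn
        exact ⟨C, fun _ x => by simpa [Real.norm_eq_abs] using hC x (Set.mem_univ x)⟩
    choose B hB using hBs
    set A₀ : ℝ := ∑ s ∈ Finset.range (R + 1), |B s| with hA₀def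
    have hA₀nonneg : 0 ≤ A₀ := Finset.sum_nonneg fun _ _ => abs_nonneg _
    have hA₀bound : ∀ s : ℕ, 1 ≤ s → s ≤ R → ∀ x : Ω, |f s x| ≤ A₀ := by
      intro s hs1 hsR x
      calc |f s x| ≤ B s := hB s hs1 x
        _ ≤ |B s| := le_abs_self _
        _ ≤ A₀ := Finset.single_le_sum (f := fun s => |B s|)
            (fun _ _ => abs_nonneg _) (Finset.mem_range.mpr (by omega))
    set A : ℝ := A₀ + (R : ℝ) * (|cU| + 3 * δ) with hAdef
    have hAnonneg : 0 ≤ A := by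
      have : (0:ℝ) ≤ (R : ℝ) * (|cU| + 3 * δ) := by positivity
      linarith
    refine ⟨N₀ + R + 1, by omega, A, hAnonneg, cU, fun ω n hn => ?_⟩
    have hnN₀ : N₀ ≤ n := by omega
    have hn1 : 1 ≤ n := by omega
    have hn0 : (0 : ℝ) < n := by exact_mod_cast hn1
    constructor
    · -- lower bound, via backward hitting of `Wm`
      obtain ⟨t, htR, hty⟩ := hRm ω
      rcases Nat.eq_zero_or_pos t with rfl | ht1
      · simp only [Function.iterate_zero, id_eq] at hty
        have h := hWmprop ω hty n hnN₀
        rw [le_div_iff₀ hn0] at h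
        linarith [hAnonneg]
      · set ω' := (⇑T.symm)^[t] ω with hω'def
        have hTt : (⇑T)^[t] ω' = ω :=
          (Function.LeftInverse.iterate T.apply_symm_apply t) ω
        have hsubineq := hsub t n ht1 hn1 ω'
        rw [hTt] at hsubineq
        have htn0 : (0 : ℝ) < ((t + n : ℕ) : ℝ) := by
          have : 0 < t + n := by omega
          exact_mod_cast this
        have hWm' := hWmprop ω' hty (t + n) (by omega)
        rw [le_div_iff₀ htn0] at hWm'
        have hft : f t ω' ≤ A₀ :=
          le_of_abs_le (hA₀bound t ht1 (le_trans htR (le_max_right Rp Rm)) ω')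
        have habs : |cU - 3 * δ| ≤ |cU| + 3 * δ := by
          rcases abs_cases (cU - 3 * δ) with h | h
          · have := le_abs_self cU; linarith [h.1]
          · have := neg_abs_le cU; linarith [h.1]
        have htR' : (t : ℝ) ≤ R := by
          exact_mod_cast le_trans htR (le_max_right Rp Rm)
        have ht0 : (0:ℝ) ≤ (t:ℝ) := Nat.cast_nonneg t
        have h1 : ((t + n : ℕ) : ℝ) * (cU - 3 * δ)
            ≥ (n : ℝ) * (cU - 3 * δ) - (t : ℝ) * |cU - 3 * δ| := by
          have hmul := mul_le_mul_of_nonneg_left (neg_abs_le (cU - 3 * δ)) ht0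
          push_cast
          linarith [hmul]
        have h2 : (t : ℝ) * |cU - 3 * δ| ≤ (R : ℝ) * (|cU| + 3 * δ) :=
          mul_le_mul htR' habs (abs_nonneg _) (Nat.cast_nonneg R)
        linarith [hsubineq, hWm', hft, h1, h2, hAdef]
    · -- upper bound, via forward hitting of `Wp`
      obtain ⟨t, htR, hty⟩ := hRp ω
      rcases Nat.eq_zero_or_pos t with rfl | ht1
      · simp only [Function.iterate_zero, id_eq] at hty
        have h := hWpprop ω hty n hnN₀
        rw [div_le_iff₀ hn0] at h
        linarith [hAnonneg]
      · set p := n - t with hpdef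
        have hnp : n = t + p := by omega
        have hpN₀ : N₀ ≤ p := by omega
        have hp1 : 1 ≤ p := by omega
        have hp0 : (0 : ℝ) < p := by exact_mod_cast hp1
        have hsubineq := hsub t p ht1 hp1 ω
        rw [← hnp] at hsubineq
        have hWp' := hWpprop _ hty p hpN₀
        rw [div_le_iff₀ hp0] at hWp'
        have hft : f t ω ≤ A₀ :=
          le_of_abs_le (hA₀bound t ht1 (le_trans htR (le_max_left Rp Rm)) ω)
        have habs : |cU + 3 * δ| ≤ |cU| + 3 * δ := by
          rcases abs_cases (cU + 3 * δ) with h | h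
          · have := le_abs_self cU; linarith [h.1]
          · have := neg_abs_le cU; linarith [h.1]
        have hpn : (p : ℝ) = (n : ℝ) - t := by
          rw [hnp]; push_cast; ring
        have htR' : (t : ℝ) ≤ R := by
          exact_mod_cast le_trans htR (le_max_left Rp Rm)
        have ht0 : (0:ℝ) ≤ (t:ℝ) := Nat.cast_nonneg t
        have h1 : (p : ℝ) * (cU + 3 * δ)
            ≤ (n : ℝ) * (cU + 3 * δ) + (t : ℝ) * |cU + 3 * δ| := by
          have hmul := mul_le_mul_of_nonneg_left (neg_abs_le (cU + 3 * δ)) ht0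
          rw [hpn]
          linarith [hmul]
        have h2 : (t : ℝ) * |cU + 3 * δ| ≤ (R : ℝ) * (|cU| + 3 * δ) :=
          mul_le_mul htR' habs (abs_nonneg _) (Nat.cast_nonneg R)
        linarith [hsubineq, hWp', hft, h1, h2, hAdef]
  -- from the key estimate, pin down `φ` within `3δ` of a constant
  have philim : ∀ (δ A c : ℝ) (N : ℕ), 0 < δ →
      (∀ ω : Ω, ∀ n : ℕ, N ≤ n →
        (n : ℝ) * (c - 3 * δ) - A ≤ f n ω ∧ f n ω ≤ (n : ℝ) * (c + 3 * δ) + A) →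
      ∀ ω : Ω, c - 3 * δ ≤ φ ω ∧ φ ω ≤ c + 3 * δ := by
    intro δ A c N hδ hbound ω
    have hAdiv : Tendsto (fun n : ℕ => A / (n : ℝ)) atTop (𝓝 0) :=
      tendsto_const_div_atTop_nhds_zero_nat A
    have hlower : ∀ᶠ n : ℕ in atTop, (c - 3 * δ) - A / n ≤ f n ω / n := by
      filter_upwards [eventually_ge_atTop (max N 1)] with n hn
      have hn1 : 1 ≤ n := le_trans (le_max_right N 1) hn
      have hn0 : (0 : ℝ) < n := by exact_mod_cast hn1
      have h := (hbound ω n (le_trans (le_max_left N 1) hn)).1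
      have h2 : ((n : ℝ) * (c - 3 * δ) - A) / n ≤ f n ω / n := by gcongr
      have h3 : ((n : ℝ) * (c - 3 * δ) - A) / n = (c - 3 * δ) - A / n := by
        rw [sub_div, mul_comm ((n : ℝ)) _, mul_div_assoc, div_self (ne_of_gt hn0), mul_one]
      linarith [h2, h3]
    have hupper : ∀ᶠ n : ℕ in atTop, f n ω / n ≤ (c + 3 * δ) + A / n := by
      filter_upwards [eventually_ge_atTop (max N 1)] with n hn
      have hn1 : 1 ≤ n := le_trans (le_max_right N 1) hn
      have hn0 : (0 : ℝ) < n := by exact_mod_cast hn1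
      have h := (hbound ω n (le_trans (le_max_left N 1) hn)).2
      have h2 : f n ω / n ≤ ((n : ℝ) * (c + 3 * δ) + A) / n := by gcongr
      have h3 : ((n : ℝ) * (c + 3 * δ) + A) / n = (c + 3 * δ) + A / n := by
        rw [add_div, mul_comm ((n : ℝ)) _, mul_div_assoc, div_self (ne_of_gt hn0), mul_one]
      linarith [h2, h3]
    constructor
    · have ht : Tendsto (fun n : ℕ => (c - 3 * δ) - A / n) atTop (𝓝 (c - 3 * δ)) := by
        simpa using (tendsto_const_nhds (x := c - 3 * δ)).sub hAdiv
      exact le_of_tendsto_of_tendsto ht (hφ ω) hlower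
    · have ht : Tendsto (fun n : ℕ => (c + 3 * δ) + A / n) atTop (𝓝 (c + 3 * δ)) := by
        simpa using (tendsto_const_nhds (x := c + 3 * δ)).add hAdiv
      exact le_of_tendsto_of_tendsto (hφ ω) ht hupper
  -- `φ` is constant
  obtain ⟨ω₀⟩ := hΩ
  have hconst : ∀ ω : Ω, φ ω = φ ω₀ := by
    have hle : ∀ ω ω' : Ω, φ ω ≤ φ ω' := by
      intro ω ω'
      by_contra hcon
      push_neg at hcon
      set δ := (φ ω - φ ω') / 7 with hδdef
      have hδ : 0 < δ := by simp only [hδdef]; linarith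
      obtain ⟨N, hN1, A, hA, c, hkey⟩ := key δ hδ
      have h1 := (philim δ A c N hδ hkey ω).2
      have h2 := (philim δ A c N hδ hkey ω').1
      simp only [hδdef] at h1 h2
      linarith
    exact fun ω => le_antisymm (hle ω ω₀) (hle ω₀ ω)
  refine ⟨⟨φ ω₀, hconst⟩, ?_⟩
  -- uniform convergence
  rw [Metric.tendstoUniformly_iff]
  intro ε hε
  have hδ : 0 < ε / 8 := by positivity
  obtain ⟨N, hN1, A, hA, c, hkey⟩ := key (ε / 8) hδ
  have hφb := philim (ε / 8) A c N hδ hkey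
  have hAdiv : Tendsto (fun n : ℕ => A / (n : ℝ)) atTop (𝓝 0) :=
    tendsto_const_div_atTop_nhds_zero_nat A
  have hAev : ∀ᶠ n : ℕ in atTop, A / (n : ℝ) < ε / 8 :=
    hAdiv.eventually_lt_const hδ
  filter_upwards [eventually_ge_atTop (max N 1), hAev] with n hn hAn ω
  have hn1 : 1 ≤ n := le_trans (le_max_right N 1) hn
  have hn0 : (0 : ℝ) < n := by exact_mod_cast hn1
  have hb := hkey ω n (le_trans (le_max_left N 1) hn)
  have hφω := hφb ω
  rw [Real.dist_eq, abs_lt]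
  have hub : f n ω / n ≤ c + 3 * (ε / 8) + A / n := by
    have h2 : f n ω / n ≤ ((n : ℝ) * (c + 3 * (ε / 8)) + A) / n := by gcongr; exact hb.2
    have h3 : ((n : ℝ) * (c + 3 * (ε / 8)) + A) / n = (c + 3 * (ε / 8)) + A / n := by
      rw [add_div, mul_comm ((n : ℝ)) _, mul_div_assoc, div_self (ne_of_gt hn0), mul_one]
    linarith [h2, h3]
  have hlb : c - 3 * (ε / 8) - A / n ≤ f n ω / n := by
    have h2 : ((n : ℝ) * (c - 3 * (ε / 8)) - A) / n ≤ f n ω / n := by gcongr; exact hb.1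
    have h3 : ((n : ℝ) * (c - 3 * (ε / 8)) - A) / n = (c - 3 * (ε / 8)) - A / n := by
      rw [sub_div, mul_comm ((n : ℝ)) _, mul_div_assoc, div_self (ne_of_gt hn0), mul_one]
    linarith [h2, h3]
  constructor <;> [skip; skip] <;> linarith [hφω.1, hφω.2]
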